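/- Let Σ be a p×p real symmetric matrix with diagonal entries Σ_{jj} = 1 and off-diagonal entries ρ_{jk}. If for some δ < 1 and some α ≥ 1, (Σ_j (Σ_{k≠j} |ρ_{jk}|^{α/(α-1)})^{α-1})^{1/α} ≤ δ, then every eigenvalue τ of Σ satisfies |1 - τ| ≤ δ; that is, all eigenvalues lie in [1-δ, 1+δ]. -/

import Mathlib

open Finset

/-- ℓ_α-version of Geršgorin's theorem (key step in Proposition 1):
if the diagonal entries of a symmetric matrix are 1 and the ℓ_α-Geršgorin
quantity of the off-diagonal entries is at most δ < 1, then every eigenvalue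
τ satisfies |1 - τ| ≤ δ. -/
theorem gershgorin_lalpha (p : ℕ) (S : Matrix (Fin p) (Fin p) ℝ)
    (hsym : S.IsSymm) (hdiag : ∀ j, S j j = 1)
    (α δ : ℝ) (hα : 1 ≤ α) (hδ : δ < 1)
    (hbound :
      (∑ j : Fin p,
          (∑ k ∈ univ.filter (fun k => k ≠ j), |S j k| ^ (α / (α - 1))) ^ (α - 1))
        ^ (1 / α) ≤ δ) :
    ∀ (τ : ℝ) (v : Fin p → ℝ), v ≠ 0 → S.mulVec v = τ • v → |1 - τ| ≤ δ := by
  intro τ v hv heig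
  have hα0 : 0 < α := lt_of_lt_of_le one_pos hα
  -- p = 0 is impossible since v ≠ 0
  rcases Nat.eq_zero_or_pos p with hp0 | hp0
  · exact absurd (funext fun i : Fin p => absurd i.2 (by omega)) hv
  -- the case α = 1 forces p = 0, contradiction
  rcases eq_or_lt_of_le hα with hα1 | hα1
  · exfalso
    have h1 : α - 1 = 0 := by rw [← hα1]; ring
    have : (∑ j : Fin p,
        (∑ k ∈ univ.filter (fun k => k ≠ j), |S j k| ^ (α / (α - 1))) ^ (α - 1))
          ^ (1 / α) = (p : ℝ) := by
      simp [h1, Real.rpow_zero, ← hα1, Real.rpow_natCast]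
    rw [this] at hbound
    have : (1 : ℝ) ≤ (p : ℝ) := by exact_mod_cast hp0
    linarith
  -- main case : α > 1
  set q : ℝ := α / (α - 1) with hq
  have hpq : α.HolderConjugate q := Real.HolderConjugate.conjExponent hα1
  have hαm1 : 0 < α - 1 := by linarith
  -- the eigenvector equation rearranged
  have key : ∀ j : Fin p, (1 - τ) * v j = -(∑ k ∈ univ.filter (fun k => k ≠ j), S j k * v k) := by
    intro j
    have hj : ∑ k : Fin p, S j k * v k = τ * v j := by
      have := congrFun heig j
      simpa [Matrix.mulVec, dotProduct] using this
    have hsplit : ∑ k : Fin p, S j k * v k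
        = S j j * v j + ∑ k ∈ univ.filter (fun k => k ≠ j), S j k * v k := by
      rw [← Finset.add_sum_erase univ _ (mem_univ j)]
      congr 1
      apply Finset.sum_congr _ (fun _ _ => rfl)
      ext k; simp [eq_comm]
    rw [hsplit, hdiag j] at hj
    linarith
  set B : ℝ := ∑ k : Fin p, |v k| ^ α with hB
  have hBnonneg : ∀ k : Fin p, (0:ℝ) ≤ |v k| ^ α := fun k => Real.rpow_nonneg (abs_nonneg _) _
  have hBpos : 0 < B := by
    obtain ⟨k, hk⟩ : ∃ k, v k ≠ 0 := by
      by_contra h; push_neg at h; exact hv (funext h)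
    have : 0 < |v k| ^ α := Real.rpow_pos_of_pos (abs_pos.mpr hk) _
    exact Finset.sum_pos' (fun i _ => hBnonneg i) ⟨k, mem_univ k, this⟩
  set A : Fin p → ℝ := fun j => ∑ k ∈ univ.filter (fun k => k ≠ j), |S j k| ^ q with hA
  have hAnonneg : ∀ j, 0 ≤ A j := fun j =>
    Finset.sum_nonneg fun k _ => Real.rpow_nonneg (abs_nonneg _) _
  -- pointwise Hölder bound
  have pointwise : ∀ j : Fin p, |1 - τ| * |v j| ≤ A j ^ (1/q) * B ^ (1/α) := by
    intro j
    have h1 : |1 - τ| * |v j| = |(1 - τ) * v j| := (abs_mul _ _).symm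
    rw [h1, key j, abs_neg]
    calc |∑ k ∈ univ.filter (fun k => k ≠ j), S j k * v k|
        ≤ ∑ k ∈ univ.filter (fun k => k ≠ j), |S j k * v k| := Finset.abs_sum_le_sum_abs _ _
      _ = ∑ k ∈ univ.filter (fun k => k ≠ j), |S j k| * |v k| := by
          simp [abs_mul]
      _ ≤ (∑ k ∈ univ.filter (fun k => k ≠ j), |S j k| ^ q) ^ (1/q) *
          (∑ k ∈ univ.filter (fun k => k ≠ j), |v k| ^ α) ^ (1/α) :=
          Real.inner_le_Lp_mul_Lq_of_nonneg _ hpq.symm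
            (fun i _ => abs_nonneg _) (fun i _ => abs_nonneg _)
      _ ≤ A j ^ (1/q) * B ^ (1/α) := by
          apply mul_le_mul_of_nonneg_left _ (Real.rpow_nonneg (hAnonneg j) _)
          apply Real.rpow_le_rpow (Finset.sum_nonneg fun k _ => hBnonneg k) _
            (by positivity)
          exact Finset.sum_le_sum_of_subset_of_nonneg (Finset.filter_subset _ _)
            (fun k _ _ => hBnonneg k)
  -- raise to the α-th power and sum over j
  have pow_bound : ∀ j : Fin p, |1 - τ| ^ α * |v j| ^ α ≤ A j ^ (α - 1) * B := by
    intro j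
    have h := Real.rpow_le_rpow (by positivity) (pointwise j) (le_of_lt hα0)
    calc |1 - τ| ^ α * |v j| ^ α
        = (|1 - τ| * |v j|) ^ α := (Real.mul_rpow (abs_nonneg _) (abs_nonneg _)).symm
      _ ≤ (A j ^ (1/q) * B ^ (1/α)) ^ α := h
      _ = A j ^ (α - 1) * B := by
          rw [Real.mul_rpow (Real.rpow_nonneg (hAnonneg j) _)
            (Real.rpow_nonneg hBpos.le _),
            ← Real.rpow_mul (hAnonneg j), ← Real.rpow_mul hBpos.le,
            one_div, one_div, inv_mul_cancel₀ (ne_of_gt hα0), Real.rpow_one]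
          congr 1
          rw [hq]
          field_simp
  set T : ℝ := ∑ j : Fin p, A j ^ (α - 1) with hT
  have hTnonneg : 0 ≤ T := Finset.sum_nonneg fun j _ => Real.rpow_nonneg (hAnonneg j) _
  have sum_bound : |1 - τ| ^ α * B ≤ T * B := by
    calc |1 - τ| ^ α * B = ∑ j : Fin p, |1 - τ| ^ α * |v j| ^ α := by
          rw [hB, Finset.mul_sum]
      _ ≤ ∑ j : Fin p, A j ^ (α - 1) * B := Finset.sum_le_sum fun j _ => pow_bound j
      _ = T * B := by rw [hT, Finset.sum_mul]
  have htau : |1 - τ| ^ α ≤ T := le_of_mul_le_mul_right sum_bound hBpos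
  -- conclude
  have final : |1 - τ| ≤ T ^ (1/α) := by
    have := Real.rpow_le_rpow (Real.rpow_nonneg (abs_nonneg _) _) htau
      (by positivity : (0:ℝ) ≤ 1/α)
    rwa [← Real.rpow_mul (abs_nonneg _), mul_one_div, div_self (ne_of_gt hα0),
      Real.rpow_one] at this
  exact final.trans hbound
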